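/- Define the generalized Appell polyanalytic polynomials M_{k,s}(q,q̄) = x_0^k Q_s(q,q̄), where x_0 = Re(q). Then for any fixed n ≥ 0, 0 ≤ k ≤ n and s ≥ k+1, one has D̄^{k+1}(M_{k,s}(q,q̄)) = Σ_{j=1}^{k+1} 2^j · C(k+1,j) · k!·s!/((j−1)!(s−j)!) · M_{j−1,s−j}(q,q̄). -/

import Mathlib

open Quaternion Real MeasureTheory

noncomputable section

/-- The quaternion imaginary unit `i`. -/
def qi : ℍ[ℝ] := ⟨0,1,0,0⟩
/-- The quaternion imaginary unit `j`. -/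
def qj : ℍ[ℝ] := ⟨0,0,1,0⟩
/-- The quaternion imaginary unit `k`. -/
def qk : ℍ[ℝ] := ⟨0,0,0,1⟩

/-- Directional (partial) derivative of `f : ℍ → ℍ` at `q` in direction `v`. -/
def pd (v : ℍ[ℝ]) (f : ℍ[ℝ] → ℍ[ℝ]) (q : ℍ[ℝ]) : ℍ[ℝ] := fderiv ℝ f q v

/-- The Cauchy–Fueter operator `D = ∂_{x₀} + i∂_{x₁} + j∂_{x₂} + k∂_{x₃}`. -/
def Dop (f : ℍ[ℝ] → ℍ[ℝ]) (q : ℍ[ℝ]) : ℍ[ℝ] :=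
  pd 1 f q + qi * pd qi f q + qj * pd qj f q + qk * pd qk f q

/-- The conjugate Cauchy–Fueter operator `D̄ = ∂_{x₀} - i∂_{x₁} - j∂_{x₂} - k∂_{x₃}`. -/
def Dbar (f : ℍ[ℝ] → ℍ[ℝ]) (q : ℍ[ℝ]) : ℍ[ℝ] :=
  pd 1 f q - qi * pd qi f q - qj * pd qj f q - qk * pd qk f q

/-- The 4-dimensional Laplacian `Δ = ∂²_{x₀} + ∂²_{x₁} + ∂²_{x₂} + ∂²_{x₃}`. -/
def qlap (f : ℍ[ℝ] → ℍ[ℝ]) (q : ℍ[ℝ]) : ℍ[ℝ] :=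
  pd 1 (pd 1 f) q + pd qi (pd qi f) q + pd qj (pd qj f) q + pd qk (pd qk f) q

/-- The quaternionic Appell polynomials
`Q_k(q,q̄) = Σ_{j=0}^k (2(k-j+1)/((k+1)(k+2))) q^{k-j} q̄^j`. -/
def Qa (k : ℕ) (q : ℍ[ℝ]) : ℍ[ℝ] :=
  ∑ j ∈ Finset.range (k+1),
    ((2*((k:ℝ)-j+1))/(((k:ℝ)+1)*((k:ℝ)+2))) • (q^(k-j) * (star q)^j)

/-- The generalized Appell polyanalytic polynomials `M_{k,s}(q,q̄) = x₀^k Q_s(q,q̄)`,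
where `x₀ = Re q`. -/
def Ma (k s : ℕ) (q : ℍ[ℝ]) : ℍ[ℝ] := q.re ^ k • Qa s q
instance : StarModule ℝ ℍ[ℝ] := ⟨fun r x => by ext <;> simp⟩

section basic
variable {f g : ℍ[ℝ] → ℍ[ℝ]} {q v : ℍ[ℝ]}

lemma pd_const (c : ℍ[ℝ]) : pd v (fun _ => c) q = 0 := by
  simp [pd]

lemma pd_id : pd v (fun p => p) q = v := by
  simp [pd, fderiv_id']

lemma pd_add (hf : DifferentiableAt ℝ f q) (hg : DifferentiableAt ℝ g q) :
    pd v (fun p => f p + g p) q = pd v f q + pd v g q := by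
  simp [pd, fderiv_fun_add hf hg]

lemma pd_smul (c : ℝ) (hf : DifferentiableAt ℝ f q) :
    pd v (fun p => c • f p) q = c • pd v f q := by
  simp [pd, fderiv_fun_const_smul hf]

lemma pd_sum {ι : Type*} (s : Finset ι) (F : ι → ℍ[ℝ] → ℍ[ℝ])
    (h : ∀ i ∈ s, DifferentiableAt ℝ (F i) q) :
    pd v (fun p => ∑ i ∈ s, F i p) q = ∑ i ∈ s, pd v (F i) q := by
  simp [pd, fderiv_fun_sum h]

lemma pd_mul (hf : DifferentiableAt ℝ f q) (hg : DifferentiableAt ℝ g q) :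
    pd v (fun p => f p * g p) q = pd v f q * g q + f q * pd v g q := by
  rw [pd, fderiv_fun_mul' hf hg]
  simp [pd, smul_eq_mul, add_comm]

lemma pd_star_comp (g : ℍ[ℝ] → ℍ[ℝ]) (hg : DifferentiableAt ℝ g (star q)) :
    pd v (fun p => g (star p)) q = pd (star v) g (star q) := by
  have h1 : HasFDerivAt (fun p : ℍ[ℝ] => star p)
      (((starL' ℝ : ℍ[ℝ] ≃L[ℝ] ℍ[ℝ]) : ℍ[ℝ] →L[ℝ] ℍ[ℝ]) ∘L (ContinuousLinearMap.id ℝ ℍ[ℝ])) q := by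
    simpa using (hasFDerivAt_id q).star
  have h2 : HasFDerivAt (fun p => g (star p))
      ((fderiv ℝ g (star q)).comp
        (((starL' ℝ : ℍ[ℝ] ≃L[ℝ] ℍ[ℝ]) : ℍ[ℝ] →L[ℝ] ℍ[ℝ]) ∘L (ContinuousLinearMap.id ℝ ℍ[ℝ]))) q :=
    hg.hasFDerivAt.comp q h1
  rw [pd, h2.fderiv, pd]
  simp

lemma diff_pow (m : ℕ) : Differentiable ℝ (fun p : ℍ[ℝ] => p ^ m) :=
  differentiable_id.pow m

lemma pd_pow (m : ℕ) : pd v (fun p : ℍ[ℝ] => p ^ m) q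
    = ∑ a ∈ Finset.range m, q ^ a * v * q ^ (m - 1 - a) := by
  induction m with
  | zero => simpa using pd_const 1
  | succ m ih =>
    have e : (fun p : ℍ[ℝ] => p ^ (m+1)) = fun p => p ^ m * p := by
      funext p; rw [pow_succ]
    rw [e, pd_mul ((diff_pow m) q) differentiableAt_fun_id, ih, pd_id,
      Finset.sum_range_succ, Finset.sum_mul]
    congr 1
    · apply Finset.sum_congr rfl
      intro a ha
      rw [mul_assoc, ← pow_succ]
      congr 2
      simp at ha; omega
    · simp

lemma pd_starpow (j : ℕ) : pd v (fun p : ℍ[ℝ] => (star p) ^ j) q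
    = ∑ c ∈ Finset.range j, (star q) ^ c * (star v) * (star q) ^ (j - 1 - c) := by
  rw [pd_star_comp _ ((diff_pow j) _), pd_pow]

lemma diff_starpow (j : ℕ) : Differentiable ℝ (fun p : ℍ[ℝ] => (star p) ^ j) :=
  (differentiable_id.star).pow j

lemma diff_mon (m j : ℕ) : Differentiable ℝ (fun p : ℍ[ℝ] => p ^ m * (star p) ^ j) :=
  (diff_pow m).mul (diff_starpow j)

end basic

section quatid
variable (x y q v : ℍ[ℝ])

lemma star_qi : star qi = -qi := by ext <;> simp <;> simp [qi]
lemma star_qj : star qj = -qj := by ext <;> simp <;> simp [qj]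
lemma star_qk : star qk = -qk := by ext <;> simp <;> simp [qk]

lemma sandwich : qi * x * qi + qj * x * qj + qk * x * qk = -x - star x - star x := by
  ext <;> simp [Quaternion.re_mul, Quaternion.imI_mul, Quaternion.imJ_mul,
    Quaternion.imK_mul] <;> simp [qi, qj, qk] <;> ring

lemma keyf : x * 1 * y - qi * (x * qi * y) - qj * (x * qj * y) - qk * (x * qk * y)
    = (x + x + star x + star x) * y := by
  have h := sandwich x
  have : qi * (x * qi * y) + qj * (x * qj * y) + qk * (x * qk * y)
      = (qi * x * qi + qj * x * qj + qk * x * qk) * y := by noncomm_ring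
  rw [show x * 1 * y - qi * (x * qi * y) - qj * (x * qj * y) - qk * (x * qk * y)
      = x * y - (qi * (x * qi * y) + qj * (x * qj * y) + qk * (x * qk * y)) by noncomm_ring,
    this, h]
  noncomm_ring

lemma keyg : x * 1 * y + qi * (x * qi * y) + qj * (x * qj * y) + qk * (x * qk * y)
    = -(star x * y) - star x * y := by
  have h := sandwich x
  have : qi * (x * qi * y) + qj * (x * qj * y) + qk * (x * qk * y)
      = (qi * x * qi + qj * x * qj + qk * x * qk) * y := by noncomm_ring
  rw [show x * 1 * y + qi * (x * qi * y) + qj * (x * qj * y) + qk * (x * qk * y)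
      = x * y + (qi * (x * qi * y) + qj * (x * qj * y) + qk * (x * qk * y)) by noncomm_ring,
    this, h]
  noncomm_ring

lemma comm_star_pow (a b : ℕ) : (star q) ^ a * q ^ b = q ^ b * (star q) ^ a :=
  by
  have h : Commute (star q) q := by
    unfold Commute SemiconjBy
    rw [star_comm_self']
  exact h.pow_pow a b

end quatid

section dbarmon
variable (q : ℍ[ℝ])

def Dbar' (f : ℍ[ℝ] → ℍ[ℝ]) (q : ℍ[ℝ]) : ℍ[ℝ] :=
  pd 1 f q - qi * pd qi f q - qj * pd qj f q - qk * pd qk f q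

lemma Dbar_mon (m j : ℕ) :
    Dbar' (fun p => p ^ m * (star p) ^ j) q
    = ((∑ _a ∈ Finset.range m, (q^(m-1) * (star q)^j + q^(m-1) * (star q)^j))
      + ∑ a ∈ Finset.range m, (q^(m-1-a) * (star q)^(a+j) + q^(m-1-a) * (star q)^(a+j)))
      - ∑ c ∈ Finset.range j, (q^c * (star q)^(m+j-1-c) + q^c * (star q)^(m+j-1-c)) := by
  have hpd : ∀ v : ℍ[ℝ], pd v (fun p => p^m * (star p)^j) q
      = (∑ a ∈ Finset.range m, q^a * v * q^(m-1-a)) * (star q)^j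
        + q^m * (∑ c ∈ Finset.range j, (star q)^c * star v * (star q)^(j-1-c)) := by
    intro v
    rw [pd_mul ((diff_pow m) q) ((diff_starpow j) q), pd_pow, pd_starpow]
  have e1 : ∀ v : ℍ[ℝ], (∑ a ∈ Finset.range m, q^a * v * q^(m-1-a)) * (star q)^j
      = ∑ a ∈ Finset.range m, q^a * v * (q^(m-1-a) * (star q)^j) := by
    intro v
    rw [Finset.sum_mul]
    exact Finset.sum_congr rfl fun a _ => by noncomm_ring
  have e2 : ∀ v : ℍ[ℝ], q^m * (∑ c ∈ Finset.range j, (star q)^c * v * (star q)^(j-1-c))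
      = ∑ c ∈ Finset.range j, (q^m * (star q)^c) * v * ((star q)^(j-1-c)) := by
    intro v
    rw [Finset.mul_sum]
    exact Finset.sum_congr rfl fun c _ => by noncomm_ring
  rw [Dbar', hpd 1, hpd qi, hpd qj, hpd qk, star_one, star_qi, star_qj, star_qk,
    e1 1, e1 qi, e1 qj, e1 qk, e2 1, e2 (-qi), e2 (-qj), e2 (-qk)]
  simp only [mul_add, Finset.mul_sum]
  have regroup : ∀ A1 A2 A3 A4 B1 B2 B3 B4 : ℍ[ℝ],
      (A1 + B1) - (A2 + B2) - (A3 + B3) - (A4 + B4)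
      = (A1 - A2 - A3 - A4) + (B1 - B2 - B3 - B4) := by intros; abel
  rw [regroup]
  have mergeA : ∀ (A B C D : ℕ → ℍ[ℝ]) (n : ℕ),
      ((∑ a ∈ Finset.range n, A a) - (∑ a ∈ Finset.range n, B a)
        - (∑ a ∈ Finset.range n, C a) - (∑ a ∈ Finset.range n, D a))
      = ∑ a ∈ Finset.range n, (A a - B a - C a - D a) := by
    intros
    rw [← Finset.sum_sub_distrib, ← Finset.sum_sub_distrib, ← Finset.sum_sub_distrib]
  rw [mergeA, mergeA]
  have partA : ∀ a ∈ Finset.range m,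
      (q^a * 1 * (q^(m-1-a) * (star q)^j) - qi * (q^a * qi * (q^(m-1-a) * (star q)^j))
        - qj * (q^a * qj * (q^(m-1-a) * (star q)^j)) - qk * (q^a * qk * (q^(m-1-a) * (star q)^j)))
      = (q^(m-1) * (star q)^j + q^(m-1) * (star q)^j)
        + (q^(m-1-a) * (star q)^(a+j) + q^(m-1-a) * (star q)^(a+j)) := by
    intro a ha
    rw [keyf]
    have h1 : q^a * (q^(m-1-a) * (star q)^j) = q^(m-1) * (star q)^j := by
      rw [← mul_assoc, ← pow_add]
      congr 2
      simp at ha; omega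
    have h2 : star (q^a) * (q^(m-1-a) * (star q)^j) = q^(m-1-a) * (star q)^(a+j) := by
      rw [star_pow, ← mul_assoc, comm_star_pow, mul_assoc, ← pow_add]
    rw [add_mul, add_mul, add_mul, h1, h2]
    abel
  have partB : ∀ c ∈ Finset.range j,
      ((q^m * (star q)^c) * 1 * (star q)^(j-1-c) - qi * ((q^m * (star q)^c) * -qi * (star q)^(j-1-c))
        - qj * ((q^m * (star q)^c) * -qj * (star q)^(j-1-c))
        - qk * ((q^m * (star q)^c) * -qk * (star q)^(j-1-c)))
      = -(q^c * (star q)^(m+j-1-c) + q^c * (star q)^(m+j-1-c)) := by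
    intro c hc
    have hng : ∀ u w z : ℍ[ℝ], u * (w * -u * z) = -(u * (w * u * z)) := by
      intros; noncomm_ring
    rw [hng, hng, hng, sub_neg_eq_add, sub_neg_eq_add, sub_neg_eq_add, keyg]
    have h3 : star (q^m * (star q)^c) * (star q)^(j-1-c) = q^c * (star q)^(m+j-1-c) := by
      rw [star_mul, star_pow, star_star, star_pow, mul_assoc, ← pow_add]
      congr 2
      simp at hc; omega
    rw [h3]
    abel
  rw [Finset.sum_congr rfl partA, Finset.sum_congr rfl partB]
  rw [Finset.sum_add_distrib, Finset.sum_neg_distrib]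
  abel

end dbarmon

section tri
variable {M : Type*} [AddCommMonoid M]

lemma tri (b : ℕ) (f : ℕ → ℕ → M) :
    (∑ t ∈ Finset.range (b+1), ∑ a ∈ Finset.range (b-t), f t a)
    = ∑ u ∈ Finset.range b, ∑ t ∈ Finset.range (u+1), f t (u-t) := by
  have h1 : ∀ t, (∑ a ∈ Finset.range (b-t), f t a) = ∑ w ∈ Finset.Ico t b, f t (w-t) := by
    intro t
    rw [Finset.sum_Ico_eq_sum_range]
    exact (Finset.sum_congr rfl fun i _ => by congr 1; omega).symm
  calc (∑ t ∈ Finset.range (b+1), ∑ a ∈ Finset.range (b-t), f t a)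
      = ∑ t ∈ Finset.range (b+1), ∑ w ∈ Finset.Ico t b, f t (w-t) :=
        Finset.sum_congr rfl fun t _ => h1 t
    _ = ∑ t ∈ Finset.range b, ∑ w ∈ Finset.Ico t b, f t (w-t) := by
        rw [Finset.sum_range_succ]; simp
    _ = ∑ t ∈ Finset.Ico 0 b, ∑ w ∈ Finset.Ico t b, f t (w-t) := by
        rw [Finset.range_eq_Ico]
    _ = ∑ w ∈ Finset.Ico 0 b, ∑ t ∈ Finset.Ico 0 (w+1), f t (w-t) :=
        Finset.sum_Ico_Ico_comm 0 b _
    _ = ∑ u ∈ Finset.range b, ∑ t ∈ Finset.range (u+1), f t (u-t) := by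
        simp only [← Finset.range_eq_Ico]

lemma tri2 (b : ℕ) (f : ℕ → ℕ → M) :
    (∑ t ∈ Finset.range (b+1), ∑ c ∈ Finset.range t, f t c)
    = ∑ c ∈ Finset.range b, ∑ t ∈ Finset.Icc (c+1) b, f t c := by
  calc (∑ t ∈ Finset.range (b+1), ∑ c ∈ Finset.range t, f t c)
      = ∑ t ∈ Finset.Ico 0 (b+1), ∑ c ∈ Finset.Ico 0 t, f t c := by
        simp only [Finset.range_eq_Ico]
    _ = ∑ c ∈ Finset.Ico 0 (b+1), ∑ t ∈ Finset.Ico (c+1) (b+1), f t c :=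
        (Finset.sum_Ico_Ico_comm' 0 (b+1) (fun c t => f t c)).symm
    _ = ∑ c ∈ Finset.range (b+1), ∑ t ∈ Finset.Icc (c+1) b, f t c := by
        rw [← Finset.range_eq_Ico]
        exact Finset.sum_congr rfl fun c _ => by rw [Finset.Ico_add_one_right_eq_Icc]
    _ = ∑ c ∈ Finset.range b, ∑ t ∈ Finset.Icc (c+1) b, f t c := by
        rw [Finset.sum_range_succ]
        simp

end tri

lemma sum_lin (x : ℝ) (N : ℕ) :
    ∑ t ∈ Finset.range N, (x - (t:ℝ)) = N*x - N*((N:ℝ)-1)/2 := by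
  induction N with
  | zero => simp
  | succ N ih =>
    rw [Finset.sum_range_succ, ih]
    push_cast
    ring

section dbarlin
variable {f : ℍ[ℝ] → ℍ[ℝ]} {q : ℍ[ℝ]}

lemma Dbar'_sum {ι : Type*} (s : Finset ι) (F : ι → ℍ[ℝ] → ℍ[ℝ])
    (h : ∀ i ∈ s, DifferentiableAt ℝ (F i) q) :
    Dbar' (fun p => ∑ i ∈ s, F i p) q = ∑ i ∈ s, Dbar' (F i) q := by
  simp only [Dbar', pd_sum s F h, Finset.mul_sum, Finset.sum_sub_distrib]

lemma Dbar'_smul (c : ℝ) (hf : DifferentiableAt ℝ f q) :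
    Dbar' (fun p => c • f p) q = c • Dbar' f q := by
  simp only [Dbar', pd_smul c hf, mul_smul_comm, smul_sub]

end dbarlin

lemma two_smul_trick (r : ℝ) (x : ℍ[ℝ]) : r • (x + x) = (2*r) • x := by
  rw [smul_add, ← add_smul]
  congr 1
  ring


lemma diff_Qa (b : ℕ) : Differentiable ℝ (Qa b) := by
  unfold Qa
  apply Differentiable.fun_sum
  intro t _
  exact (diff_mon (b-t) t).const_smul (_ : ℝ)

lemma Dbar'_Qa (b : ℕ) (q : ℍ[ℝ]) : Dbar' (Qa b) q = (2*(b:ℝ)) • Qa (b-1) q := by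
  rcases Nat.eq_zero_or_pos b with hb | hb
  · subst hb
    have hq : Qa 0 = fun _ => (1:ℍ[ℝ]) := by
      funext p; simp [Qa]
    rw [hq]
    simp [Dbar', pd_const]
  set D := ((b:ℝ)+1)*((b:ℝ)+2) with hD
  have hstep : Dbar' (Qa b) q = ∑ t ∈ Finset.range (b+1),
      ((2*((b:ℝ)-t+1))/D) • Dbar' (fun p => p^(b-t) * (star p)^t) q := by
    have hQb : Qa b = fun p => ∑ t ∈ Finset.range (b+1),
        ((2*((b:ℝ)-t+1))/D) • (p^(b-t) * (star p)^t) := rfl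
    rw [hQb, Dbar'_sum _ (fun (t : ℕ) p => ((2*((b:ℝ)-t+1))/D) • (p^(b-t) * (star p)^t)) (fun t _ => ((diff_mon (b-t) t) q).fun_const_smul _)]
    exact Finset.sum_congr rfl fun t _ => Dbar'_smul _ ((diff_mon (b-t) t) q)
  rw [hstep]
  have hexp : ∀ t ∈ Finset.range (b+1),
      ((2*((b:ℝ)-t+1))/D) • Dbar' (fun p => p^(b-t) * (star p)^t) q
      = ((∑ _a ∈ Finset.range (b-t), (2*((2*((b:ℝ)-t+1))/D)) • (q^(b-t-1) * (star q)^t))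
        + ∑ a ∈ Finset.range (b-t), (2*((2*((b:ℝ)-t+1))/D)) • (q^(b-1-(t+a)) * (star q)^(t+a)))
        - ∑ c ∈ Finset.range t, (2*((2*((b:ℝ)-t+1))/D)) • (q^c * (star q)^(b-1-c)) := by
    intro t ht
    rw [Dbar_mon q (b-t) t, smul_sub, smul_add, Finset.smul_sum, Finset.smul_sum, Finset.smul_sum]
    congr 1
    · congr 1
      · exact Finset.sum_congr rfl fun a _ => two_smul_trick _ _
      · apply Finset.sum_congr rfl
        intro a _
        have e1 : b-t-1-a = b-1-(t+a) := by omega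
        have e2 : a+t = t+a := by omega
        rw [e1, e2, two_smul_trick]
    · apply Finset.sum_congr rfl
      intro c _
      have e3 : (b-t)+t-1-c = b-1-c := by
        simp only [Finset.mem_range] at ht; omega
      rw [e3, two_smul_trick]
  rw [Finset.sum_congr rfl hexp, Finset.sum_sub_distrib, Finset.sum_add_distrib]
  have hS1 : ∑ t ∈ Finset.range (b+1), ∑ _a ∈ Finset.range (b-t),
        (2*((2*((b:ℝ)-t+1))/D)) • (q^(b-t-1) * (star q)^t)
      = ∑ u ∈ Finset.range b,
        ((2*((b:ℝ)-u)) * ((2*((b:ℝ)-u+1))/D)) • (q^(b-1-u) * (star q)^u) := by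
    rw [Finset.sum_range_succ]
    simp only [Nat.sub_self, Finset.range_zero, Finset.sum_empty, add_zero]
    apply Finset.sum_congr rfl
    intro t ht
    rw [Finset.sum_const, Finset.card_range]
    have e1 : b-t-1 = b-1-t := by omega
    rw [e1, ← Nat.cast_smul_eq_nsmul ℝ, smul_smul]
    congr 1
    have htb : t ≤ b := by simp only [Finset.mem_range] at ht; omega
    rw [Nat.cast_sub htb]
    ring
  have hS2 : ∑ t ∈ Finset.range (b+1), ∑ a ∈ Finset.range (b-t),
        (2*((2*((b:ℝ)-t+1))/D)) • (q^(b-1-(t+a)) * (star q)^(t+a))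
      = ∑ u ∈ Finset.range b,
        (∑ t ∈ Finset.range (u+1), (2*((2*((b:ℝ)-t+1))/D))) • (q^(b-1-u) * (star q)^u) := by
    rw [tri b (fun t a => (2*((2*((b:ℝ)-t+1))/D)) • (q^(b-1-(t+a)) * (star q)^(t+a)))]
    apply Finset.sum_congr rfl
    intro u _
    rw [Finset.sum_smul]
    apply Finset.sum_congr rfl
    intro t ht
    have e : t + (u - t) = u := by simp only [Finset.mem_range] at ht; omega
    rw [e]
  have hS3 : ∑ t ∈ Finset.range (b+1), ∑ c ∈ Finset.range t,
        (2*((2*((b:ℝ)-t+1))/D)) • (q^c * (star q)^(b-1-c))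
      = ∑ u ∈ Finset.range b,
        (∑ t ∈ Finset.Icc (b-u) b, (2*((2*((b:ℝ)-t+1))/D))) • (q^(b-1-u) * (star q)^u) := by
    calc ∑ t ∈ Finset.range (b+1), ∑ c ∈ Finset.range t,
          (2*((2*((b:ℝ)-t+1))/D)) • (q^c * (star q)^(b-1-c))
        = ∑ c ∈ Finset.range b, (∑ t ∈ Finset.Icc (c+1) b, (2*((2*((b:ℝ)-t+1))/D)))
            • (q^c * (star q)^(b-1-c)) := by
          rw [tri2 b (fun t c => (2*((2*((b:ℝ)-t+1))/D)) • (q^c * (star q)^(b-1-c)))]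
          exact Finset.sum_congr rfl fun c _ => (Finset.sum_smul).symm
      _ = ∑ u ∈ Finset.range b, (∑ t ∈ Finset.Icc ((b-1-u)+1) b, (2*((2*((b:ℝ)-t+1))/D)))
            • (q^(b-1-u) * (star q)^(b-1-(b-1-u))) :=
          (Finset.sum_range_reflect (fun c => (∑ t ∈ Finset.Icc (c+1) b, (2*((2*((b:ℝ)-t+1))/D)))
            • (q^c * (star q)^(b-1-c))) b).symm
      _ = ∑ u ∈ Finset.range b,
          (∑ t ∈ Finset.Icc (b-u) b, (2*((2*((b:ℝ)-t+1))/D))) • (q^(b-1-u) * (star q)^u) := by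
          apply Finset.sum_congr rfl
          intro u hu
          have e1 : (b-1-u)+1 = b-u := by simp only [Finset.mem_range] at hu; omega
          have e2 : b-1-(b-1-u) = u := by simp only [Finset.mem_range] at hu; omega
          rw [e1, e2]
  rw [hS1, hS2, hS3, ← Finset.sum_add_distrib, ← Finset.sum_sub_distrib]
  have hb1 : b-1+1 = b := by omega
  have hbc : (((b-1:ℕ)):ℝ) = (b:ℝ)-1 := by
    push_cast [Nat.cast_sub hb]; ring
  have hQ : Qa (b-1) q = ∑ u ∈ Finset.range b,
      ((2*((((b-1:ℕ)):ℝ)-u+1))/(((((b-1:ℕ)):ℝ)+1)*((((b-1:ℕ)):ℝ)+2))) • (q^(b-1-u) * (star q)^u) := by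
    rw [Qa, hb1]
  rw [hQ, Finset.smul_sum]
  apply Finset.sum_congr rfl
  intro u hu
  rw [smul_smul, ← add_smul, ← sub_smul]
  congr 1
  have hub : u ≤ b := by simp only [Finset.mem_range] at hu; omega
  have hub' : u < b := by simp only [Finset.mem_range] at hu; omega
  have hA : ∀ (S : Finset ℕ), (∑ t ∈ S, (2*((2*((b:ℝ)-t+1))/D)))
      = (4/D) * ∑ t ∈ S, (((b:ℝ)+1) - t) := by
    intro S
    rw [Finset.mul_sum]
    exact Finset.sum_congr rfl fun t _ => by ring
  have hsum1 : ∑ t ∈ Finset.range (u+1), (((b:ℝ)+1) - (t:ℝ))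
      = ((u:ℝ)+1)*((b:ℝ)+1) - ((u:ℝ)+1)*(u:ℝ)/2 := by
    rw [sum_lin ((b:ℝ)+1) (u+1)]
    push_cast
    ring
  have hsum2 : ∑ t ∈ Finset.Icc (b-u) b, (((b:ℝ)+1) - (t:ℝ))
      = ((u:ℝ)+1)*((u:ℝ)+1) - ((u:ℝ)+1)*(u:ℝ)/2 := by
    rw [← Finset.Ico_add_one_right_eq_Icc, Finset.sum_Ico_eq_sum_range]
    have e : b+1-(b-u) = u+1 := by omega
    rw [e]
    have : ∀ i ∈ Finset.range (u+1), ((b:ℝ)+1) - ((b-u+i:ℕ):ℝ) = ((u:ℝ)+1) - (i:ℝ) := by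
      intro i _
      push_cast [Nat.cast_sub hub]
      ring
    rw [Finset.sum_congr rfl this, sum_lin ((u:ℝ)+1) (u+1)]
    push_cast
    ring
  rw [hA, hA, hsum1, hsum2, hbc]
  have hb0 : (b:ℝ) ≠ 0 := Nat.cast_ne_zero.mpr hb.ne'
  have hbb1 : (b:ℝ)+1 ≠ 0 := by positivity
  have hbb2 : (b:ℝ)+2 ≠ 0 := by positivity
  have e : ((b:ℝ)-1+1)*((b:ℝ)-1+2) = (b:ℝ)*((b:ℝ)+1) := by ring
  rw [hD, e]
  field_simp
  ring


def rc : ℍ[ℝ] →L[ℝ] ℍ[ℝ] := LinearMap.toContinuousLinearMap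
  { toFun := fun p => ((p.re : ℝ) : ℍ[ℝ])
    map_add' := by intro x y; simp [Quaternion.coe_add]
    map_smul' := by
      intro r x
      simp only [Quaternion.re_smul, RingHom.id_apply, smul_eq_mul, Quaternion.coe_mul]
      rw [Quaternion.coe_mul_eq_smul] }

@[simp] lemma rc_apply (p : ℍ[ℝ]) : rc p = ((p.re : ℝ) : ℍ[ℝ]) := rfl

lemma Ma_eq (a b : ℕ) : Ma a b = fun p => ((p.re : ℝ) : ℍ[ℝ])^a * Qa b p := by
  funext p
  rw [Ma, ← Quaternion.coe_pow, Quaternion.coe_mul_eq_smul]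

lemma diff_Ma (a b : ℕ) : Differentiable ℝ (Ma a b) := by
  rw [Ma_eq]
  exact ((rc.differentiable.pow a).mul (diff_Qa b))

lemma pd_comp_clm {q v : ℍ[ℝ]} (L : ℍ[ℝ] →L[ℝ] ℍ[ℝ]) (g : ℍ[ℝ] → ℍ[ℝ])
    (hg : DifferentiableAt ℝ g (L q)) :
    pd v (fun p => g (L p)) q = pd (L v) g (L q) := by
  have h2 : HasFDerivAt (fun p => g (L p)) ((fderiv ℝ g (L q)).comp L) q :=
    hg.hasFDerivAt.comp q L.hasFDerivAt
  rw [pd, h2.fderiv]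
  rfl

lemma Dbar'_Ma (a b : ℕ) (q : ℍ[ℝ]) :
    Dbar' (Ma a b) q = (a:ℝ) • Ma (a-1) b q + (2*(b:ℝ)) • Ma a (b-1) q := by
  have hpd : ∀ v : ℍ[ℝ], pd v (Ma a b) q
      = (∑ i ∈ Finset.range a, ((q.re:ℝ):ℍ[ℝ])^i * ((v.re:ℝ):ℍ[ℝ]) * ((q.re:ℝ):ℍ[ℝ])^(a-1-i))
          * Qa b q
        + ((q.re:ℝ):ℍ[ℝ])^a * pd v (Qa b) q := by
    intro v
    rw [Ma_eq]
    have hdp : DifferentiableAt ℝ (fun p : ℍ[ℝ] => ((p.re:ℝ):ℍ[ℝ])^a) q := by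
      exact ((rc.differentiable.pow a)) q
    rw [pd_mul hdp ((diff_Qa b) q)]
    congr 1
    have : (fun p : ℍ[ℝ] => ((p.re:ℝ):ℍ[ℝ])^a) = fun p => (fun w : ℍ[ℝ] => w^a) (rc p) := rfl
    rw [this, pd_comp_clm rc _ (((diff_pow a)) (rc q)), pd_pow]
    rfl
  have hre1 : (((1:ℍ[ℝ]).re:ℝ):ℍ[ℝ]) = 1 := by simp
  have hrei : (((qi).re:ℝ):ℍ[ℝ]) = 0 := by simp [qi]
  have hrej : (((qj).re:ℝ):ℍ[ℝ]) = 0 := by simp [qj]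
  have hrek : (((qk).re:ℝ):ℍ[ℝ]) = 0 := by simp [qk]
  rw [Dbar', hpd 1, hpd qi, hpd qj, hpd qk, hre1, hrei, hrej, hrek]
  simp only [mul_zero, zero_mul, Finset.sum_const_zero, zero_add]
  have hcent : ∀ (u w : ℍ[ℝ]), u * (((q.re:ℝ)^a:ℝ):ℍ[ℝ]) * w
      = (((q.re:ℝ)^a:ℝ):ℍ[ℝ]) * (u * w) := by
    intro u w
    rw [Quaternion.mul_coe_eq_smul, Quaternion.coe_mul_eq_smul, smul_mul_assoc]
  have hgrp : ((q.re:ℝ):ℍ[ℝ])^a * pd 1 (Qa b) q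
      - qi * (((q.re:ℝ):ℍ[ℝ])^a * pd qi (Qa b) q)
      - qj * (((q.re:ℝ):ℍ[ℝ])^a * pd qj (Qa b) q)
      - qk * (((q.re:ℝ):ℍ[ℝ])^a * pd qk (Qa b) q)
      = ((q.re:ℝ):ℍ[ℝ])^a * Dbar' (Qa b) q := by
    rw [Dbar']
    rw [← Quaternion.coe_pow] at *
    rw [show ∀ x y z w : ℍ[ℝ], x - y - z - w = x - (y + z + w) from by intros; abel]
    rw [show ∀ x y z w : ℍ[ℝ], x - y - z - w = x - (y + z + w) from by intros; abel]
    rw [mul_sub]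
    congr 1
    rw [mul_add, mul_add]
    congr 1
    congr 1
    · rw [← mul_assoc, ← hcent qi _, mul_assoc]
    · rw [← mul_assoc, ← hcent qj _, mul_assoc]
    · rw [← mul_assoc, ← hcent qk _, mul_assoc]
  rw [show ∀ A X1 X2 X3 X4 : ℍ[ℝ], A + X1 - X2 - X3 - X4 = A + (X1 - X2 - X3 - X4) from
    by intros; abel]
  rw [hgrp, Dbar'_Qa]
  have hsum : (∑ i ∈ Finset.range a, ((q.re:ℝ):ℍ[ℝ])^i * 1 * ((q.re:ℝ):ℍ[ℝ])^(a-1-i))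
      = (a:ℕ) • (((q.re:ℝ):ℍ[ℝ])^(a-1)) := by
    have h1 : ∀ i ∈ Finset.range a, ((q.re:ℝ):ℍ[ℝ])^i * 1 * ((q.re:ℝ):ℍ[ℝ])^(a-1-i)
        = ((q.re:ℝ):ℍ[ℝ])^(a-1) := by
      intro i hi
      rw [mul_one, ← pow_add]
      congr 1
      simp only [Finset.mem_range] at hi
      omega
    rw [Finset.sum_congr rfl h1, Finset.sum_const, Finset.card_range]
  rw [hsum]
  rw [← Nat.cast_smul_eq_nsmul ℝ, smul_mul_assoc, mul_smul_comm]
  congr 1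
  · rw [Ma_eq]
  · rw [Ma_eq]

lemma iterMa (m k s : ℕ) (q : ℍ[ℝ]) :
    (Dbar'^[m] (Ma k s)) q = ∑ j ∈ Finset.range (m+1),
      ((2^j * m.choose j * k.descFactorial (m-j) * s.descFactorial j : ℕ) : ℝ)
        • Ma (k-(m-j)) (s-j) q := by
  induction m generalizing q with
  | zero => simp
  | succ m ih =>
    rw [Function.iterate_succ_apply']
    have hfun : Dbar'^[m] (Ma k s) = fun p => ∑ j ∈ Finset.range (m+1),
        ((2^j * m.choose j * k.descFactorial (m-j) * s.descFactorial j : ℕ) : ℝ)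
          • Ma (k-(m-j)) (s-j) p := funext (fun p => ih p)
    rw [hfun, Dbar'_sum _ (fun j p => ((2^j * m.choose j * k.descFactorial (m-j) * s.descFactorial j : ℕ) : ℝ)
          • Ma (k-(m-j)) (s-j) p) (fun j _ => ((diff_Ma _ _) q).fun_const_smul _)]
    have hterm : ∀ j ∈ Finset.range (m+1),
        Dbar' (fun p => ((2^j * m.choose j * k.descFactorial (m-j) * s.descFactorial j : ℕ) : ℝ)
          • Ma (k-(m-j)) (s-j) p) q
        = ((2^j * m.choose j * k.descFactorial ((m+1)-j) * s.descFactorial j : ℕ) : ℝ)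
            • Ma (k-((m+1)-j)) (s-j) q
          + ((2^(j+1) * m.choose j * k.descFactorial (m-j) * s.descFactorial (j+1) : ℕ) : ℝ)
            • Ma (k-(m-j)) (s-(j+1)) q := by
      intro j hj
      simp only [Finset.mem_range] at hj
      rw [Dbar'_smul _ ((diff_Ma _ _) q), Dbar'_Ma, smul_add, smul_smul, smul_smul]
      congr 1
      · have e1 : k-(m-j)-1 = k-((m+1)-j) := by omega
        rw [e1]
        congr 1
        have e2 : (m+1)-j = (m-j)+1 := by omega
        rw [e2, Nat.descFactorial_succ]
        push_cast
        ring
      · have e4 : s-j-1 = s-(j+1) := by omega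
        rw [e4]
        congr 1
        rw [Nat.descFactorial_succ s j]
        push_cast
        ring
    rw [Finset.sum_congr rfl hterm, Finset.sum_add_distrib]
    have hS1split : (∑ j ∈ Finset.range (m+1),
          ((2^j * m.choose j * k.descFactorial ((m+1)-j) * s.descFactorial j : ℕ) : ℝ)
            • Ma (k-((m+1)-j)) (s-j) q)
        = (∑ j ∈ Finset.range (m+1),
            ((2^(j+1) * m.choose (j+1) * k.descFactorial ((m+1)-(j+1)) * s.descFactorial (j+1) : ℕ) : ℝ)
              • Ma (k-((m+1)-(j+1))) (s-(j+1)) q)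
          + ((2^0 * m.choose 0 * k.descFactorial ((m+1)-0) * s.descFactorial 0 : ℕ) : ℝ)
              • Ma (k-((m+1)-0)) (s-0) q := by
      rw [Finset.sum_range_succ']
      congr 1
      rw [Finset.sum_range_succ]
      simp [Nat.choose_succ_self]
    rw [hS1split, add_right_comm]
    conv_rhs => rw [Finset.sum_range_succ']
    congr 1
    · rw [← Finset.sum_add_distrib]
      apply Finset.sum_congr rfl
      intro j hj
      simp only [Finset.mem_range] at hj
      have e : m-j = (m+1)-(j+1) := by omega
      rw [e, ← add_smul]
      congr 1
      rw [← Nat.cast_add, Nat.cast_inj, Nat.choose_succ_succ]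
      ring
    · congr 1
      norm_num

theorem gap' (n k s : ℕ) (hk : k ≤ n) (hs : k + 1 ≤ s) (q : ℍ[ℝ]) :
    (Dbar'^[k+1] (Ma k s)) q =
      ∑ j ∈ Finset.Icc 1 (k+1),
        ((2:ℝ)^j * ((k+1).choose j) * k.factorial * s.factorial /
            ((j-1).factorial * (s-j).factorial)) • Ma (j-1) (s-j) q := by
  rw [iterMa, Finset.sum_range_succ']
  have h0 : ((2^0 * (k+1).choose 0 * k.descFactorial ((k+1)-0) * s.descFactorial 0 : ℕ) : ℝ) = 0 := by
    simp [Nat.descFactorial_eq_zero_iff_lt.mpr (Nat.lt_succ_self k)]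
  rw [h0, zero_smul, add_zero]
  rw [show Finset.Icc 1 (k+1) = Finset.Ico 1 (k+2) from by rw [← Finset.Ico_add_one_right_eq_Icc]; rfl,
    Finset.sum_Ico_eq_sum_range, show k+2-1 = k+1 from rfl]
  apply Finset.sum_congr rfl
  intro i hi
  simp only [Finset.mem_range] at hi
  have ec : 1+i = i+1 := by omega
  rw [ec]
  have e2 : k-((k+1)-(i+1)) = i := by omega
  have e3 : (i+1)-1 = i := by omega
  rw [e2, e3]
  congr 1
  have hi1 : i+1 ≤ s := by omega
  have h1 : i.factorial * k.descFactorial ((k+1)-(i+1)) = k.factorial := by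
    have e : (k+1)-(i+1) = k-i := by omega
    rw [e]
    have h := Nat.factorial_mul_descFactorial (show k-i ≤ k by omega)
    rwa [show k-(k-i) = i by omega] at h
  have h2 : (s-(i+1)).factorial * s.descFactorial (i+1) = s.factorial :=
    Nat.factorial_mul_descFactorial hi1
  have hne : ((i.factorial:ℝ) * (((s-(i+1)).factorial:ℕ):ℝ)) ≠ 0 := by positivity
  rw [eq_div_iff hne]
  have hnat : (2^(i+1) * (k+1).choose (i+1) * k.descFactorial ((k+1)-(i+1))
        * s.descFactorial (i+1)) * (i.factorial * (s-(i+1)).factorial)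
      = 2^(i+1) * ((k+1).choose (i+1)) * k.factorial * s.factorial := by
    rw [← h1, ← h2]
    ring
  have hc := congrArg (Nat.cast (R := ℝ)) hnat
  push_cast at hc
  push_cast
  linarith [hc]

/-- Generalized Appell property: for `n ≥ 0` fixed, `0 ≤ k ≤ n` and `s ≥ k+1`,
`D̄^{k+1}(M_{k,s}(q,q̄)) = Σ_{j=1}^{k+1} 2^j C(k+1,j) k!s!/((j−1)!(s−j)!) M_{j−1,s−j}(q,q̄)`. -/
theorem generalized_appell_property (n k s : ℕ) (hk : k ≤ n) (hs : k + 1 ≤ s) (q : ℍ[ℝ]) :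
    (Dbar^[k+1] (Ma k s)) q =
      ∑ j ∈ Finset.Icc 1 (k+1),
        ((2:ℝ)^j * ((k+1).choose j) * k.factorial * s.factorial /
            ((j-1).factorial * (s-j).factorial)) • Ma (j-1) (s-j) q := by
  rw [show Dbar = Dbar' from rfl]
  exact gap' n k s hk hs q
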